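/- (Exactness of the memory reduction, S = 2.) Suppose a12 ≠ 0, c ∈ ℝ, and x1 : ℝ → ℝ is continuously differentiable with x1(t) > 0 for all t ≥ 0. Define y(t) := (1/a12)·((ẋ1(t) − b1·x1(t))/x1(t) − a11·x1(t)) and χ(t) := c + ∫₀ᵗ [b2·y(τ) + (a21·x1(τ) + a22·y(τ))·y(τ)] dτ, and suppose x1 satisfies the reduced equation ẋ1(t) = b1·x1(t) + (a11·x1(t) + a12·χ(t))·x1(t) for all t ≥ 0. Then χ = y on [0,∞), the function x2 := χ is differentiable on [0,∞) with x2(0) = c, and the pair (x1, x2) solves the full 2-species GLV system on [0,∞). -/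

import Mathlib

/-- (Exactness of the memory reduction, `S = 2`.) If `x1` is continuously
differentiable, positive on `[0,∞)`, and satisfies the reduced equation built from the memory
term `χ(t) = c + ∫₀ᵗ [b2·y + (a21·x1 + a22·y)·y]` with
`y(t) = (1/a12)·((ẋ1(t) − b1·x1(t))/x1(t) − a11·x1(t))` and `a12 ≠ 0`, then `χ = y` on
`[0,∞)`, the function `x2 := χ` is differentiable on `[0,∞)` with `x2 0 = c`, and the pair
`(x1, x2)` solves the full 2-species GLV system on `[0,∞)`. -/
theorem glv2_memory_reduction_exact
    (b1 b2 a11 a12 a21 a22 c : ℝ) (ha12 : a12 ≠ 0)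
    (x1 : ℝ → ℝ) (hx1 : ContDiff ℝ 1 x1)
    (hpos1 : ∀ t : ℝ, 0 ≤ t → 0 < x1 t)
    (y χ : ℝ → ℝ)
    (hy : ∀ t : ℝ, y t = (1 / a12) * ((deriv x1 t - b1 * x1 t) / x1 t - a11 * x1 t))
    (hχ : ∀ t : ℝ, χ t = c + ∫ τ in (0:ℝ)..t, (b2 * y τ + (a21 * x1 τ + a22 * y τ) * y τ))
    (hred : ∀ t : ℝ, 0 ≤ t →
      deriv x1 t = b1 * x1 t + (a11 * x1 t + a12 * χ t) * x1 t) :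
    (∀ t : ℝ, 0 ≤ t → χ t = y t) ∧
    DifferentiableOn ℝ χ (Set.Ici 0) ∧
    χ 0 = c ∧
    (∀ t : ℝ, 0 ≤ t →
      deriv x1 t = b1 * x1 t + (a11 * x1 t + a12 * χ t) * x1 t) ∧
    (∀ t : ℝ, 0 ≤ t →
      HasDerivWithinAt χ (b2 * χ t + (a21 * x1 t + a22 * χ t) * χ t) (Set.Ici 0) t) := by
  -- χ = y on [0,∞)
  have hχy : ∀ t : ℝ, 0 ≤ t → χ t = y t := by
    intro t ht
    have hx := (hpos1 t ht).ne'
    have h := hred t ht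
    rw [hy t, h]
    field_simp
    ring
  -- the integrand
  set f : ℝ → ℝ := fun τ => b2 * y τ + (a21 * x1 τ + a22 * y τ) * y τ with hf
  -- continuity of f at points of [0,∞)
  have hcx1 : Continuous x1 := hx1.continuous
  have hcd : Continuous (deriv x1) := (hx1.continuous_deriv le_rfl)
  have hfc : ∀ t : ℝ, 0 ≤ t → ContinuousAt f t := by
    intro t ht
    have hx := (hpos1 t ht).ne'
    have hyc : ContinuousAt y t := by
      have : ContinuousAt (fun τ => (1 / a12) * ((deriv x1 τ - b1 * x1 τ) / x1 τ - a11 * x1 τ)) t := by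
        exact (continuousAt_const.mul (((hcd.continuousAt.sub
          (continuousAt_const.mul hcx1.continuousAt)).div hcx1.continuousAt hx).sub
          (continuousAt_const.mul hcx1.continuousAt)))
      exact this.congr (by filter_upwards with τ using (hy τ).symm)
    exact (continuousAt_const.mul hyc).add
      (((continuousAt_const.mul hcx1.continuousAt).add (continuousAt_const.mul hyc)).mul hyc)
  have hfcOn : ContinuousOn f (Set.Ici 0) := fun t ht => (hfc t ht).continuousWithinAt
  -- interval integrability on [0, t]
  have hint : ∀ t : ℝ, 0 ≤ t → IntervalIntegrable f MeasureTheory.volume 0 t := by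
    intro t ht
    apply (hfcOn.mono ?_).intervalIntegrable
    rw [Set.uIcc_of_le ht]
    exact Set.Icc_subset_Ici_self
  -- derivative of χ within Ici 0
  have hderiv : ∀ t : ℝ, 0 ≤ t → HasDerivWithinAt χ (f t) (Set.Ici 0) t := by
    intro t ht
    have key : HasDerivWithinAt (fun u => ∫ τ in (0:ℝ)..u, f τ) (f t) (Set.Ici 0) t := by
      rcases eq_or_lt_of_le ht with h0 | h0
      · subst h0
        have hmeas : StronglyMeasurableAtFilter f (nhdsWithin (0:ℝ) (Set.Ioi 0)) :=
          ⟨Set.Ici 0, Filter.mem_of_superset self_mem_nhdsWithin Set.Ioi_subset_Ici_self,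
            hfcOn.aestronglyMeasurable measurableSet_Ici⟩
        exact intervalIntegral.integral_hasDerivWithinAt_right (hint 0 le_rfl)
          hmeas ((hfc 0 le_rfl).continuousWithinAt)
      · exact (intervalIntegral.integral_hasDerivAt_right (hint t ht)
          ⟨Set.Ici 0, Filter.mem_of_superset (Ioi_mem_nhds h0) Set.Ioi_subset_Ici_self,
            hfcOn.aestronglyMeasurable measurableSet_Ici⟩ (hfc t ht)).hasDerivWithinAt
    have : HasDerivWithinAt (fun u => c + ∫ τ in (0:ℝ)..u, f τ) (f t) (Set.Ici 0) t :=
      key.const_add c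
    exact this.congr (fun u _ => hχ u) (hχ t)
  refine ⟨hχy, fun t ht => ((hderiv t ht).differentiableWithinAt), ?_, hred, ?_⟩
  · rw [hχ 0, intervalIntegral.integral_same, add_zero]
  · intro t ht
    have := hderiv t ht
    rwa [show f t = b2 * χ t + (a21 * x1 t + a22 * χ t) * χ t by rw [hf]; simp [hχy t ht]] at this
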